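/- Let G be an Eulerian orientation of K_{m,n} (m, n even) with vertex classes A (|A| = m) and B (|B| = n). Let x be the number of quadruples (two distinct vertices of A together with two distinct vertices of B) spanning a directed 4-cycle and h₁ the number of quadruples spanning the orientation H₁ of the 4-cycle with two sources and two sinks. Then 2x + 2h₁ ≥ C(m,2)·(n² − 2n − 1)/8 + C(n,2)·(m² − 2m − 1)/8. -/

import Mathlib

open Finset

/-- An orientation of `K_{m,n}`: `o a b = true` means the edge between left vertex `a` and
right vertex `b` is directed from `a` to `b`; it is Eulerian if every vertex has equal
indegree and outdegree. -/
def IsEulerianBip {m n : ℕ} (o : Fin m → Fin n → Bool) : Prop :=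
  (∀ a : Fin m, 2 * (univ.filter fun b : Fin n => o a b = true).card = n) ∧
  (∀ b : Fin n, 2 * (univ.filter fun a : Fin m => o a b = true).card = m)

/-- The four arcs spanned by the distinct left vertices `a₁, a₂` and the distinct right
vertices `b₁, b₂` form the directed 4-cycle `a₁ → b₁ → a₂ → b₂ → a₁` or its reverse. -/
def SpansC4 {m n : ℕ} (o : Fin m → Fin n → Bool) (a₁ a₂ : Fin m) (b₁ b₂ : Fin n) : Prop :=
  (o a₁ b₁ = true ∧ o a₂ b₁ = false ∧ o a₂ b₂ = true ∧ o a₁ b₂ = false) ∨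
  (o a₁ b₁ = false ∧ o a₂ b₁ = true ∧ o a₂ b₂ = false ∧ o a₁ b₂ = true)

instance {m n : ℕ} (o : Fin m → Fin n → Bool) (a₁ a₂ : Fin m) (b₁ b₂ : Fin n) :
    Decidable (SpansC4 o a₁ a₂ b₁ b₂) := by
  unfold SpansC4; infer_instance

/-- The four arcs spanned by `a₁, a₂, b₁, b₂` form the orientation `H₁` of the undirected
4-cycle having two sources and two sinks: either both left vertices are sources (all four
arcs point rightwards) or both right vertices are sources (all four arcs point leftwards). -/
def SpansH1 {m n : ℕ} (o : Fin m → Fin n → Bool) (a₁ a₂ : Fin m) (b₁ b₂ : Fin n) : Prop :=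
  o a₁ b₁ = o a₂ b₁ ∧ o a₂ b₂ = o a₂ b₁ ∧ o a₁ b₂ = o a₂ b₁

instance {m n : ℕ} (o : Fin m → Fin n → Bool) (a₁ a₂ : Fin m) (b₁ b₂ : Fin n) :
    Decidable (SpansH1 o a₁ a₂ b₁ b₂) := by
  unfold SpansH1; infer_instance

/-- The number of quadruples (two distinct left vertices and two distinct right vertices)
spanning a directed 4-cycle; each quadruple is recorded once via `a₁ < a₂`, `b₁ < b₂`. -/
def numC4 {m n : ℕ} (o : Fin m → Fin n → Bool) : ℕ :=
  ((univ : Finset (Fin m × Fin m × Fin n × Fin n)).filter fun q =>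
    q.1 < q.2.1 ∧ q.2.2.1 < q.2.2.2 ∧ SpansC4 o q.1 q.2.1 q.2.2.1 q.2.2.2).card

/-- The number of quadruples (two distinct left vertices and two distinct right vertices)
spanning a copy of `H₁`; each quadruple is recorded once via `a₁ < a₂`, `b₁ < b₂`. -/
def numH1 {m n : ℕ} (o : Fin m → Fin n → Bool) : ℕ :=
  ((univ : Finset (Fin m × Fin m × Fin n × Fin n)).filter fun q =>
    q.1 < q.2.1 ∧ q.2.2.1 < q.2.2.2 ∧ SpansH1 o q.1 q.2.1 q.2.2.1 q.2.2.2).card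


set_option maxHeartbeats 1000000
set_option maxRecDepth 10000


private def PcP {k : ℕ} (v w : Fin k → Bool) (x₁ x₂ : Fin k) : Prop :=
  (v x₁ = true ∧ w x₁ = false ∧ v x₂ = false ∧ w x₂ = true) ∨
  (v x₁ = false ∧ w x₁ = true ∧ v x₂ = true ∧ w x₂ = false)

private def PhP {k : ℕ} (v w : Fin k → Bool) (x₁ x₂ : Fin k) : Prop :=
  v x₁ = v x₂ ∧ w x₂ = v x₂ ∧ w x₁ = v x₂

instance {k : ℕ} (v w : Fin k → Bool) (x₁ x₂ : Fin k) : Decidable (PcP v w x₁ x₂) := by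
  unfold PcP; infer_instance

instance {k : ℕ} (v w : Fin k → Bool) (x₁ x₂ : Fin k) : Decidable (PhP v w x₁ x₂) := by
  unfold PhP; infer_instance

private lemma split_lt {k : ℕ} (g : Fin k → Fin k → ℕ) (hsym : ∀ a b, g b a = g a b) :
    ∑ a, ∑ b, g a b = 2 * (∑ a, ∑ b, if a < b then g a b else 0) + ∑ a, g a a := by
  have key : ∀ a b : Fin k, g a b =
      (if a < b then g a b else 0) + (if b < a then g a b else 0) +
      (if a = b then g a b else 0) := by
    intro a b
    rcases lt_trichotomy a b with h | h | h
    · simp [h, asymm h, h.ne]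
    · simp [h]
    · simp [h, asymm h, h.ne']
  calc ∑ a, ∑ b, g a b
      = ∑ a, ∑ b, ((if a < b then g a b else 0) + (if b < a then g a b else 0) +
        (if a = b then g a b else 0)) := by
        exact Finset.sum_congr rfl fun a _ => Finset.sum_congr rfl fun b _ => key a b
    _ = (∑ a, ∑ b, if a < b then g a b else 0) + (∑ a, ∑ b, if b < a then g a b else 0)
        + (∑ a, ∑ b, if a = b then g a b else 0) := by
        simp [Finset.sum_add_distrib]
    _ = 2 * (∑ a, ∑ b, if a < b then g a b else 0) + ∑ a, g a a := by
        have h2 : (∑ a, ∑ b, if b < a then g a b else 0)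
            = ∑ a, ∑ b, if a < b then g a b else 0 := by
          rw [Finset.sum_comm]
          exact Finset.sum_congr rfl fun a _ => Finset.sum_congr rfl fun b _ => by
            rw [hsym]
        have h3 : (∑ a : Fin k, ∑ b, if a = b then g a b else 0) = ∑ a, g a a := by
          exact Finset.sum_congr rfl fun a _ => by simp [Finset.sum_ite_eq]
        rw [h2, h3]; ring

private lemma prod_count {k : ℕ} (P Q : Fin k → Prop) [DecidablePred P] [DecidablePred Q] :
    (∑ a : Fin k, ∑ b : Fin k, (if P a then 1 else 0) * (if Q b then 1 else 0) : ℕ)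
      = (univ.filter P).card * (univ.filter Q).card := by
  rw [← Finset.sum_mul_sum, Finset.card_filter, Finset.card_filter]

private lemma core_arith (k p s t q FC FH : ℕ)
    (hps : 2 * (p + s) = k) (hpt : 2 * (p + t) = k) (htot : p + s + t + q = k)
    (hC : 2 * FC = 2 * (s * t)) (hH : 2 * FH + (p + q) = p * p + q * q) :
    ((k : ℝ) ^ 2 - 2 * k - 1) / 8 ≤ (FC : ℝ) + FH := by
  have hts : t = s := by omega
  have hqp : q = p := by omega
  rw [hts] at hC
  rw [hqp] at hH
  have hCr : 2 * (FC : ℝ) = 2 * ((s : ℝ) * s) := by exact_mod_cast hC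
  have hHr : 2 * (FH : ℝ) + ((p : ℝ) + p) = (p : ℝ) * p + (p : ℝ) * p := by exact_mod_cast hH
  have hkr : (k : ℝ) = 2 * ((p : ℝ) + s) := by exact_mod_cast hps.symm
  nlinarith [sq_nonneg (2 * (p : ℝ) - 2 * s - 1)]

private lemma core {k : ℕ} (v w : Fin k → Bool)
    (hv : 2 * (univ.filter fun a => v a = true).card = k)
    (hw : 2 * (univ.filter fun a => w a = true).card = k) :
    ((k : ℝ) ^ 2 - 2 * k - 1) / 8 ≤
      ((∑ x₁ : Fin k, ∑ x₂ : Fin k, if x₁ < x₂ ∧ PcP v w x₁ x₂ then 1 else 0 : ℕ) : ℝ) +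
      ((∑ x₁ : Fin k, ∑ x₂ : Fin k, if x₁ < x₂ ∧ PhP v w x₁ x₂ then 1 else 0 : ℕ) : ℝ) := by
  refine core_arith k
    (univ.filter fun a : Fin k => v a = true ∧ w a = true).card
    (univ.filter fun a : Fin k => v a = true ∧ w a = false).card
    (univ.filter fun a : Fin k => v a = false ∧ w a = true).card
    (univ.filter fun a : Fin k => v a = false ∧ w a = false).card
    _ _ ?_ ?_ ?_ ?_ ?_
  · -- hps
    have h : (univ.filter fun a : Fin k => v a = true ∧ w a = true).card
        + (univ.filter fun a : Fin k => v a = true ∧ w a = false).card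
        = (univ.filter fun a => v a = true).card := by
      simp only [card_filter, ← Finset.sum_add_distrib]
      exact Finset.sum_congr rfl fun a _ => by cases hva : v a <;> cases hwa : w a <;>
        simp [hva, hwa]
    omega
  · -- hpt
    have h : (univ.filter fun a : Fin k => v a = true ∧ w a = true).card
        + (univ.filter fun a : Fin k => v a = false ∧ w a = true).card
        = (univ.filter fun a => w a = true).card := by
      simp only [card_filter, ← Finset.sum_add_distrib]
      exact Finset.sum_congr rfl fun a _ => by cases hva : v a <;> cases hwa : w a <;>
        simp [hva, hwa]
    omega
  · -- htot
    have : ((univ.filter fun a : Fin k => v a = true ∧ w a = true).card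
        + (univ.filter fun a : Fin k => v a = true ∧ w a = false).card
        + (univ.filter fun a : Fin k => v a = false ∧ w a = true).card
        + (univ.filter fun a : Fin k => v a = false ∧ w a = false).card) = ∑ _a : Fin k, 1 := by
      simp only [card_filter, ← Finset.sum_add_distrib]
      exact Finset.sum_congr rfl fun a _ => by cases hva : v a <;> cases hwa : w a <;>
        simp [hva, hwa]
    simpa using this
  · -- hC
    have hsplit := split_lt (fun a b => if PcP v w a b then 1 else 0)
      (fun a b => by
        refine if_congr ?_ rfl rfl
        unfold PcP; tauto)
    have hdiag : (∑ a : Fin k, if PcP v w a a then 1 else 0) = 0 :=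
      Finset.sum_eq_zero fun a _ => by cases hva : v a <;> simp [PcP, hva]
    have htotC : (∑ a : Fin k, ∑ b : Fin k, if PcP v w a b then 1 else 0)
        = 2 * ((univ.filter fun a : Fin k => v a = true ∧ w a = false).card
          * (univ.filter fun a : Fin k => v a = false ∧ w a = true).card) := by
      have key : ∀ a b : Fin k, (if PcP v w a b then 1 else 0) =
          (if (v a = true ∧ w a = false) then 1 else 0) * (if (v b = false ∧ w b = true) then 1 else 0)
          + (if (v a = false ∧ w a = true) then 1 else 0) * (if (v b = true ∧ w b = false) then 1 else 0) := by
        intro a b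
        cases hva : v a <;> cases hwa : w a <;> cases hvb : v b <;> cases hwb : w b <;>
          simp [PcP, hva, hwa, hvb, hwb]
      calc (∑ a : Fin k, ∑ b : Fin k, if PcP v w a b then 1 else 0)
          = (∑ a : Fin k, ∑ b : Fin k,
              ((if (v a = true ∧ w a = false) then 1 else 0) * (if (v b = false ∧ w b = true) then 1 else 0)
              + (if (v a = false ∧ w a = true) then 1 else 0) * (if (v b = true ∧ w b = false) then 1 else 0))) :=
            Finset.sum_congr rfl fun a _ => Finset.sum_congr rfl fun b _ => key a b
        _ = _ := by
            simp only [Finset.sum_add_distrib]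
            rw [prod_count, prod_count]
            ring
    have hite : ∀ a b : Fin k, (if a < b ∧ PcP v w a b then (1:ℕ) else 0) =
        (if a < b then (if PcP v w a b then 1 else 0) else 0) := fun a b => by
      by_cases h : a < b <;> simp [h]
    simp only [hite]
    omega
  · -- hH
    have hsplit := split_lt (fun a b => if PhP v w a b then 1 else 0)
      (fun a b => by
        refine if_congr ?_ rfl rfl
        constructor <;> (rintro ⟨h1, h2, h3⟩; simp_all [PhP]))
    have hdiag : (∑ a : Fin k, if PhP v w a a then 1 else 0)
        = (univ.filter fun a : Fin k => v a = true ∧ w a = true).card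
          + (univ.filter fun a : Fin k => v a = false ∧ w a = false).card := by
      simp only [card_filter, ← Finset.sum_add_distrib]
      exact Finset.sum_congr rfl fun a _ => by
        cases hva : v a <;> cases hwa : w a <;> simp [PhP, hva, hwa]
    have htotH : (∑ a : Fin k, ∑ b : Fin k, if PhP v w a b then 1 else 0)
        = (univ.filter fun a : Fin k => v a = true ∧ w a = true).card
          * (univ.filter fun a : Fin k => v a = true ∧ w a = true).card
        + (univ.filter fun a : Fin k => v a = false ∧ w a = false).card
          * (univ.filter fun a : Fin k => v a = false ∧ w a = false).card := by
      have key : ∀ a b : Fin k, (if PhP v w a b then 1 else 0) =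
          (if (v a = true ∧ w a = true) then 1 else 0) * (if (v b = true ∧ w b = true) then 1 else 0)
          + (if (v a = false ∧ w a = false) then 1 else 0) * (if (v b = false ∧ w b = false) then 1 else 0) := by
        intro a b
        cases hva : v a <;> cases hwa : w a <;> cases hvb : v b <;> cases hwb : w b <;>
          simp [PhP, hva, hwa, hvb, hwb]
      calc (∑ a : Fin k, ∑ b : Fin k, if PhP v w a b then 1 else 0)
          = (∑ a : Fin k, ∑ b : Fin k,
              ((if (v a = true ∧ w a = true) then 1 else 0) * (if (v b = true ∧ w b = true) then 1 else 0)
              + (if (v a = false ∧ w a = false) then 1 else 0) * (if (v b = false ∧ w b = false) then 1 else 0))) :=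
            Finset.sum_congr rfl fun a _ => Finset.sum_congr rfl fun b _ => key a b
        _ = _ := by
            simp only [Finset.sum_add_distrib]
            rw [prod_count, prod_count]
    have hite : ∀ a b : Fin k, (if a < b ∧ PhP v w a b then (1:ℕ) else 0) =
        (if a < b then (if PhP v w a b then 1 else 0) else 0) := fun a b => by
      by_cases h : a < b <;> simp [h]
    simp only [hite]
    omega

private lemma comm4 {α β : Type*} [Fintype α] [Fintype β] (f : α → α → β → β → ℕ) :
    ∑ a₁ : α, ∑ a₂ : α, ∑ b₁ : β, ∑ b₂ : β, f a₁ a₂ b₁ b₂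
      = ∑ b₁ : β, ∑ b₂ : β, ∑ a₁ : α, ∑ a₂ : α, f a₁ a₂ b₁ b₂ := by
  have h1 : ∀ a₁ : α, (∑ a₂ : α, ∑ b₁ : β, ∑ b₂ : β, f a₁ a₂ b₁ b₂)
      = ∑ b₁ : β, ∑ b₂ : β, ∑ a₂ : α, f a₁ a₂ b₁ b₂ := fun a₁ => by
    rw [Finset.sum_comm]
    exact Finset.sum_congr rfl fun b₁ _ => Finset.sum_comm
  simp_rw [h1]
  rw [Finset.sum_comm]
  exact Finset.sum_congr rfl fun b₁ _ => Finset.sum_comm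

private lemma two_choose_two (l : ℕ) : 2 * l.choose 2 + l = l * l := by
  induction l with
  | zero => simp
  | succ M ih =>
    rw [Nat.choose_succ_succ, Nat.choose_one_right,
      show (M + 1) * (M + 1) = M * M + 2 * M + 1 from by ring, ← ih]
    ring

private lemma choose_pairs (l : ℕ) :
    (∑ j₁ : Fin l, ∑ j₂ : Fin l, if j₁ < j₂ then 1 else 0) = l.choose 2 := by
  have h := split_lt (fun _ _ : Fin l => 1) (fun _ _ => rfl)
  simp only [Finset.sum_const, card_univ, Fintype.card_fin, smul_eq_mul, mul_one] at h
  rw [← two_choose_two l] at h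
  omega


private lemma viaPairs {k l : ℕ} (u : Fin l → Fin k → Bool)
    (hu : ∀ j, 2 * (univ.filter fun a => u j a = true).card = k) :
    (l.choose 2 : ℝ) * ((k : ℝ) ^ 2 - 2 * k - 1) / 8 ≤
      ((∑ j₁ : Fin l, ∑ j₂ : Fin l, ∑ x₁ : Fin k, ∑ x₂ : Fin k,
        if j₁ < j₂ ∧ x₁ < x₂ ∧ PcP (u j₁) (u j₂) x₁ x₂ then 1 else 0 : ℕ) : ℝ) +
      ((∑ j₁ : Fin l, ∑ j₂ : Fin l, ∑ x₁ : Fin k, ∑ x₂ : Fin k,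
        if j₁ < j₂ ∧ x₁ < x₂ ∧ PhP (u j₁) (u j₂) x₁ x₂ then 1 else 0 : ℕ) : ℝ) := by
  set C : ℝ := ((k : ℝ) ^ 2 - 2 * k - 1) / 8 with hCdef
  -- pull out the condition j₁ < j₂ (in ℕ)
  have hsplitC : (∑ j₁ : Fin l, ∑ j₂ : Fin l, ∑ x₁ : Fin k, ∑ x₂ : Fin k,
      if j₁ < j₂ ∧ x₁ < x₂ ∧ PcP (u j₁) (u j₂) x₁ x₂ then 1 else 0 : ℕ)
      = ∑ j₁ : Fin l, ∑ j₂ : Fin l, if j₁ < j₂ then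
          (∑ x₁ : Fin k, ∑ x₂ : Fin k, if x₁ < x₂ ∧ PcP (u j₁) (u j₂) x₁ x₂ then 1 else 0)
        else 0 :=
    Finset.sum_congr rfl fun j₁ _ => Finset.sum_congr rfl fun j₂ _ => by
      by_cases hj : j₁ < j₂ <;> simp [hj]
  have hsplitH : (∑ j₁ : Fin l, ∑ j₂ : Fin l, ∑ x₁ : Fin k, ∑ x₂ : Fin k,
      if j₁ < j₂ ∧ x₁ < x₂ ∧ PhP (u j₁) (u j₂) x₁ x₂ then 1 else 0 : ℕ)
      = ∑ j₁ : Fin l, ∑ j₂ : Fin l, if j₁ < j₂ then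
          (∑ x₁ : Fin k, ∑ x₂ : Fin k, if x₁ < x₂ ∧ PhP (u j₁) (u j₂) x₁ x₂ then 1 else 0)
        else 0 :=
    Finset.sum_congr rfl fun j₁ _ => Finset.sum_congr rfl fun j₂ _ => by
      by_cases hj : j₁ < j₂ <;> simp [hj]
  rw [hsplitC, hsplitH]
  -- cast to ℝ
  rw [Nat.cast_sum, Nat.cast_sum]
  simp only [Nat.cast_sum]
  simp only [apply_ite (fun x : ℕ => (x : ℝ)), Nat.cast_zero]
  -- lower bound each term
  have hstep : (∑ j₁ : Fin l, ∑ j₂ : Fin l, if j₁ < j₂ then C else 0) ≤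
      (∑ j₁ : Fin l, ∑ j₂ : Fin l, if j₁ < j₂ then
          ((∑ x₁ : Fin k, ∑ x₂ : Fin k, if x₁ < x₂ ∧ PcP (u j₁) (u j₂) x₁ x₂ then 1 else 0 : ℕ) : ℝ)
        else 0) +
      (∑ j₁ : Fin l, ∑ j₂ : Fin l, if j₁ < j₂ then
          ((∑ x₁ : Fin k, ∑ x₂ : Fin k, if x₁ < x₂ ∧ PhP (u j₁) (u j₂) x₁ x₂ then 1 else 0 : ℕ) : ℝ)
        else 0) := by
    rw [← Finset.sum_add_distrib]
    refine Finset.sum_le_sum fun j₁ _ => ?_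
    rw [← Finset.sum_add_distrib]
    refine Finset.sum_le_sum fun j₂ _ => ?_
    by_cases hj : j₁ < j₂
    · simpa [hj, hCdef] using core (u j₁) (u j₂) (hu j₁) (hu j₂)
    · simp [hj]
  refine le_trans (le_of_eq ?_) hstep
  -- LHS equals choose * C
  have h1 : ((l.choose 2 : ℕ) : ℝ) = ∑ j₁ : Fin l, ∑ j₂ : Fin l, (if j₁ < j₂ then (1:ℝ) else 0) := by
    rw [← choose_pairs l, Nat.cast_sum]
    simp only [Nat.cast_sum]
    simp only [apply_ite (fun x : ℕ => (x : ℝ)), Nat.cast_zero, Nat.cast_one]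
  rw [mul_div_assoc, ← hCdef, h1, Finset.sum_mul]
  refine Finset.sum_congr rfl fun j₁ _ => ?_
  rw [Finset.sum_mul]
  refine Finset.sum_congr rfl fun j₂ _ => ?_
  by_cases hj : j₁ < j₂ <;> simp [hj]

/-- For an Eulerian orientation of `K_{m,n}` (`m`, `n` even), with `x` the number of
quadruples spanning a directed 4-cycle and `h₁` the number of quadruples spanning `H₁`,
one has `2x + 2h₁ ≥ C(m,2)·(n² − 2n − 1)/8 + C(n,2)·(m² − 2m − 1)/8`. -/
theorem numC4_add_numH1_lower_bound (m n : ℕ) (hm : Even m) (hn : Even n)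
    (o : Fin m → Fin n → Bool) (ho : IsEulerianBip o) :
    (m.choose 2 : ℝ) * ((n : ℝ) ^ 2 - 2 * n - 1) / 8 +
      (n.choose 2 : ℝ) * ((m : ℝ) ^ 2 - 2 * m - 1) / 8 ≤
      2 * (numC4 o : ℝ) + 2 * (numH1 o : ℝ) := by
  -- numC4 and numH1 as quadruple sums
  have hC0 : numC4 o = ∑ a₁ : Fin m, ∑ a₂ : Fin m, ∑ b₁ : Fin n, ∑ b₂ : Fin n,
      if a₁ < a₂ ∧ b₁ < b₂ ∧ SpansC4 o a₁ a₂ b₁ b₂ then 1 else 0 := by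
    rw [numC4, card_filter]
    simp only [Fintype.sum_prod_type]
  have hH0 : numH1 o = ∑ a₁ : Fin m, ∑ a₂ : Fin m, ∑ b₁ : Fin n, ∑ b₂ : Fin n,
      if a₁ < a₂ ∧ b₁ < b₂ ∧ SpansH1 o a₁ a₂ b₁ b₂ then 1 else 0 := by
    rw [numH1, card_filter]
    simp only [Fintype.sum_prod_type]
  -- a-side versions
  have hCa : numC4 o = ∑ a₁ : Fin m, ∑ a₂ : Fin m, ∑ b₁ : Fin n, ∑ b₂ : Fin n,
      if a₁ < a₂ ∧ b₁ < b₂ ∧ PcP (o a₁) (o a₂) b₁ b₂ then 1 else 0 := by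
    rw [hC0]
    refine Finset.sum_congr rfl fun a₁ _ => Finset.sum_congr rfl fun a₂ _ =>
      Finset.sum_congr rfl fun b₁ _ => Finset.sum_congr rfl fun b₂ _ => ?_
    refine if_congr (and_congr_right fun _ => and_congr_right fun _ => ?_) rfl rfl
    unfold SpansC4 PcP; tauto
  have hHa : numH1 o = ∑ a₁ : Fin m, ∑ a₂ : Fin m, ∑ b₁ : Fin n, ∑ b₂ : Fin n,
      if a₁ < a₂ ∧ b₁ < b₂ ∧ PhP (o a₁) (o a₂) b₁ b₂ then 1 else 0 := by
    rw [hH0]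
    refine Finset.sum_congr rfl fun a₁ _ => Finset.sum_congr rfl fun a₂ _ =>
      Finset.sum_congr rfl fun b₁ _ => Finset.sum_congr rfl fun b₂ _ => ?_
    refine if_congr (and_congr_right fun _ => and_congr_right fun _ => ?_) rfl rfl
    unfold SpansH1 PhP
    cases h1 : o a₁ b₁ <;> cases h2 : o a₂ b₁ <;> cases h3 : o a₂ b₂ <;> cases h4 : o a₁ b₂ <;>
      simp [h1, h2, h3, h4]
  -- b-side versions
  have hCb : numC4 o = ∑ b₁ : Fin n, ∑ b₂ : Fin n, ∑ a₁ : Fin m, ∑ a₂ : Fin m,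
      if b₁ < b₂ ∧ a₁ < a₂ ∧ PcP (fun a => o a b₁) (fun a => o a b₂) a₁ a₂ then 1 else 0 := by
    rw [hC0, comm4]
    refine Finset.sum_congr rfl fun b₁ _ => Finset.sum_congr rfl fun b₂ _ =>
      Finset.sum_congr rfl fun a₁ _ => Finset.sum_congr rfl fun a₂ _ => ?_
    refine if_congr ?_ rfl rfl
    unfold SpansC4 PcP; tauto
  have hHb : numH1 o = ∑ b₁ : Fin n, ∑ b₂ : Fin n, ∑ a₁ : Fin m, ∑ a₂ : Fin m,
      if b₁ < b₂ ∧ a₁ < a₂ ∧ PhP (fun a => o a b₁) (fun a => o a b₂) a₁ a₂ then 1 else 0 := by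
    rw [hH0, comm4]
    refine Finset.sum_congr rfl fun b₁ _ => Finset.sum_congr rfl fun b₂ _ =>
      Finset.sum_congr rfl fun a₁ _ => Finset.sum_congr rfl fun a₂ _ => ?_
    refine if_congr ?_ rfl rfl
    unfold SpansH1 PhP
    cases h1 : o a₁ b₁ <;> cases h2 : o a₂ b₁ <;> cases h3 : o a₂ b₂ <;> cases h4 : o a₁ b₂ <;>
      simp [h1, h2, h3, h4, and_comm]
  have hA := viaPairs (l := m) (k := n) o ho.1
  have hB := viaPairs (l := n) (k := m) (fun b a => o a b) ho.2
  rw [← hCa, ← hHa] at hA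
  rw [← hCb, ← hHb] at hB
  linarith
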